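/- If f : X → Y is an open perfect (closed, continuous, surjective, with compact fibers) mapping onto a star-Scheepers space Y, then X is star-Scheepers. -/
import Mathlib


open Set

/-- The dominating number 𝔡: least cardinality of a dominating family in ℕ^ℕ. -/
noncomputable def dominatingNumber : Cardinal :=
  sInf { c | ∃ D : Set (ℕ → ℕ),
    (∀ g : ℕ → ℕ, ∃ f ∈ D, ∀ᶠ n in Filter.atTop, g n ≤ f n) ∧ c = Cardinal.mk D }

/-- `U` is an open cover of the space `X`. -/
def IsOpenCover {X : Type*} [TopologicalSpace X] (U : Set (Set X)) : Prop :=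
  (∀ u ∈ U, IsOpen u) ∧ ⋃₀ U = Set.univ

/-- The star of a set `A` with respect to a family `U`. -/
def starOf {X : Type*} (A : Set X) (U : Set (Set X)) : Set X :=
  ⋃₀ {B | B ∈ U ∧ (A ∩ B).Nonempty}

/-- The star-Scheepers property (ω-cover form). -/
def StarScheepers (X : Type*) [TopologicalSpace X] : Prop :=
  ∀ U : ℕ → Set (Set X), (∀ n, IsOpenCover (U n)) →
    ∃ V : ℕ → Set (Set X), (∀ n, V n ⊆ U n ∧ (V n).Finite) ∧
      ∀ F : Set X, F.Finite → ∃ n, F ⊆ starOf (⋃₀ V n) (U n)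

/-- The strongly star-Scheepers property. -/
def StronglyStarScheepers (X : Type*) [TopologicalSpace X] : Prop :=
  ∀ U : ℕ → Set (Set X), (∀ n, IsOpenCover (U n)) →
    ∃ F : ℕ → Set X, (∀ n, (F n).Finite) ∧
      ∀ G : Set X, G.Finite → ∃ n, G ⊆ starOf (F n) (U n)

theorem stmt_15 {X Y : Type*} [TopologicalSpace X] [TopologicalSpace Y]
    (f : X → Y) (hcont : Continuous f) (hclosed : IsClosedMap f)
    (hopen : IsOpenMap f) (hsurj : Function.Surjective f)
    (hfib : ∀ y : Y, IsCompact (f ⁻¹' {y}))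
    (hY : StarScheepers Y) :
    StarScheepers X := by
  intro U hU
  -- Step 1: for each n and y, a finite subfamily of `U n` covering the fiber,
  -- each member meeting the fiber.
  have key : ∀ n (y : Y), ∃ T : Set (Set X), T ⊆ U n ∧ T.Finite ∧
      f ⁻¹' {y} ⊆ ⋃₀ T ∧ ∀ u ∈ T, (u ∩ f ⁻¹' {y}).Nonempty := by
    intro n y
    obtain ⟨t, ht⟩ := (hfib y).elim_finite_subcover (fun i : (U n) => (i : Set X))
      (fun i => (hU n).1 i i.2)
      (by
        rw [← Set.sUnion_eq_iUnion, (hU n).2]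
        exact Set.subset_univ _)
    refine ⟨(Subtype.val '' (↑t : Set (U n))) ∩ {u | (u ∩ f ⁻¹' {y}).Nonempty},
      ?_, ?_, ?_, ?_⟩
    · rintro u ⟨⟨i, _, rfl⟩, -⟩; exact i.2
    · exact (t.finite_toSet.image _).subset Set.inter_subset_left
    · intro x hx
      obtain ⟨i, hi, hxi⟩ := Set.mem_iUnion₂.1 (ht hx)
      exact ⟨i, ⟨⟨i, hi, rfl⟩, ⟨x, hxi, hx⟩⟩, hxi⟩
    · rintro u ⟨-, hu⟩; exact hu
  choose T hTsub hTfin hTcov hTne using key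
  -- The open set `W n y` containing the fiber.
  set W : ℕ → Y → Set X := fun n y => ⋃₀ T n y with hW
  have hWopen : ∀ n y, IsOpen (W n y) :=
    fun n y => isOpen_sUnion fun u hu => (hU n).1 u (hTsub n y hu)
  -- The open set `V0 n y` around y with preimage inside `W n y` (closedness of f).
  set V0 : ℕ → Y → Set Y := fun n y => (f '' (W n y)ᶜ)ᶜ with hV0
  have hV0open : ∀ n y, IsOpen (V0 n y) :=
    fun n y => (hclosed _ (hWopen n y).isClosed_compl).isOpen_compl
  have hV0mem : ∀ n y, y ∈ V0 n y := by
    intro n y hmem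
    obtain ⟨x, hx, hfx⟩ := hmem
    exact hx (hTcov n y (by simp [hfx]))
  have hV0pre : ∀ n y, f ⁻¹' (V0 n y) ⊆ W n y := by
    intro n y x hx
    by_contra hxW
    exact hx ⟨x, hxW, rfl⟩
  -- The neighbourhood `V n y`, contained in `f '' u` for each `u ∈ T n y`.
  set V : ℕ → Y → Set Y := fun n y => V0 n y ∩ ⋂ u ∈ T n y, f '' u with hV
  have hVopen : ∀ n y, IsOpen (V n y) := by
    intro n y
    exact (hV0open n y).inter <| (hTfin n y).isOpen_biInter
      fun u hu => hopen u ((hU n).1 u (hTsub n y hu))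
  have hVmem : ∀ n y, y ∈ V n y := by
    intro n y
    refine ⟨hV0mem n y, Set.mem_iInter₂.2 fun u hu => ?_⟩
    obtain ⟨p, hpu, hpf⟩ := hTne n y u hu
    exact ⟨p, hpu, hpf⟩
  have hVsub : ∀ n y, V n y ⊆ V0 n y := fun n y => Set.inter_subset_left
  have hVimg : ∀ n y, ∀ u ∈ T n y, V n y ⊆ f '' u := by
    intro n y u hu w hw
    exact Set.mem_iInter₂.1 hw.2 u hu
  -- Open covers of Y.
  have hcov : ∀ n, IsOpenCover (Set.range (V n)) := by
    intro n
    constructor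
    · rintro v ⟨y, rfl⟩; exact hVopen n y
    · apply Set.eq_univ_of_forall
      intro y
      exact ⟨V n y, Set.mem_range_self y, hVmem n y⟩
  obtain ⟨Wsel, hWsel, hstar⟩ := hY (fun n => Set.range (V n)) hcov
  have hex : ∀ n (C : Set Y), C ∈ Wsel n → ∃ y, V n y = C :=
    fun n C hC => (hWsel n).1 hC
  choose ych hych using hex
  refine ⟨fun n => ⋃ C : Wsel n, T n (ych n C C.2), fun n => ⟨?_, ?_⟩, ?_⟩
  · exact Set.iUnion_subset fun C => hTsub n _
  · haveI := (hWsel n).2.to_subtype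
    exact Set.finite_iUnion fun C => hTfin n _
  · intro G hG
    obtain ⟨n, hn⟩ := hstar (f '' G) (hG.image f)
    refine ⟨n, fun x hx => ?_⟩
    have hfx : f x ∈ starOf (⋃₀ Wsel n) (Set.range (V n)) :=
      hn (Set.mem_image_of_mem f hx)
    obtain ⟨B, ⟨hBmem, ⟨w, hw1, hw2⟩⟩, hfxB⟩ := hfx
    obtain ⟨z, rfl⟩ := hBmem
    -- x lies in some u ∈ T n z
    obtain ⟨u, hu, hxu⟩ := hV0pre n z (hVsub n z hfxB)
    -- w ∈ f '' u, pick q ∈ u with f q = w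
    obtain ⟨q, hqu, hqw⟩ := hVimg n z u hu hw2
    -- w lies in some C ∈ Wsel n
    obtain ⟨C, hC, hwC⟩ := hw1
    -- q ∈ ⋃₀ T n (ych n C hC)
    have hq : q ∈ ⋃₀ T n (ych n C hC) := by
      apply hV0pre n (ych n C hC)
      show f q ∈ V0 n (ych n C hC)
      rw [hqw]
      exact hVsub n _ (by rw [hych n C hC]; exact hwC)
    obtain ⟨u', hu', hqu'⟩ := hq
    refine ⟨u, ⟨hTsub n z hu, ⟨q, ⟨u', ?_, hqu'⟩, hqu⟩⟩, hxu⟩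
    exact Set.mem_iUnion.2 ⟨⟨C, hC⟩, hu'⟩
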